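/- Let X be a 3×3 real symmetric positive-definite matrix with eigenvalues σ_1(X) ≥ σ_2(X) ≥ σ_3(X) > 0, and let R ∈ SO(3). Then 0 ≤ d(X, R·X·Rᵀ) ≤ √3 · log( σ_1(X) / σ_3(X) ), and the lower bound is achieved when R = I. In particular, the distance traversed under a rotation of X vanishes when X is isotropic and grows with the anisotropy of X. -/

import Mathlib

open Matrix

open scoped Classical in
/-- The symmetric positive-semidefinite square root of a matrix (junk value `0` if the
matrix is not positive semidefinite). -/
noncomputable def msqrt {n : ℕ} (X : Matrix (Fin n) (Fin n) ℝ) : Matrix (Fin n) (Fin n) ℝ :=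
  if h : X.PosSemidef then
    h.1.eigenvectorUnitary.1 * diagonal ((RCLike.ofReal : ℝ → ℝ) ∘ (fun x => √x) ∘ h.1.eigenvalues) *
      (star h.1.eigenvectorUnitary : Matrix (Fin n) (Fin n) ℝ)
  else 0

open scoped Classical in
/-- The geodesic distance between positive-definite matrices `X` and `Y`:
`d(X,Y) = sqrt (∑ i, (log λ_i)²)` where `λ_i` are the eigenvalues of the symmetric
positive-definite matrix `X^{-1/2} Y X^{-1/2}` (junk value `0` if that matrix is
not symmetric). -/
noncomputable def geoDist {n : ℕ} (X Y : Matrix (Fin n) (Fin n) ℝ) : ℝ :=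
  if h : ((msqrt X)⁻¹ * Y * (msqrt X)⁻¹).IsHermitian then
    Real.sqrt (∑ i, Real.log (h.eigenvalues i) ^ 2)
  else 0

lemma dot_shift {n : ℕ} (B : Matrix (Fin n) (Fin n) ℝ) (x y : Fin n → ℝ) :
    x ⬝ᵥ (B *ᵥ y) = (Bᵀ *ᵥ x) ⬝ᵥ y := by
  rw [mulVec_transpose, dotProduct_mulVec]

lemma eig_dot {n : ℕ} {A : Matrix (Fin n) (Fin n) ℝ} (hA : A.IsHermitian) (i : Fin n) :
    hA.eigenvalues i = (⇑(hA.eigenvectorBasis i)) ⬝ᵥ (A *ᵥ ⇑(hA.eigenvectorBasis i)) := by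
  simpa using hA.eigenvalues_eq i

lemma basis_dot_self {n : ℕ} {A : Matrix (Fin n) (Fin n) ℝ} (hA : A.IsHermitian) (i : Fin n) :
    (⇑(hA.eigenvectorBasis i)) ⬝ᵥ (⇑(hA.eigenvectorBasis i)) = 1 := by
  have h := hA.eigenvectorBasis.orthonormal.1 i
  have := EuclideanSpace.inner_eq_star_dotProduct (hA.eigenvectorBasis i) (hA.eigenvectorBasis i)
  rw [@inner_self_eq_norm_sq_to_K ℝ] at this
  rw [h] at this
  simpa using this.symm

lemma quad_repr {n : ℕ} {A : Matrix (Fin n) (Fin n) ℝ} (hA : A.IsHermitian) (w : Fin n → ℝ) :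
    w ⬝ᵥ (A *ᵥ w) = ∑ i, hA.eigenvalues i *
      (((hA.eigenvectorUnitary : Matrix (Fin n) (Fin n) ℝ)ᵀ *ᵥ w) i)^2 ∧
    w ⬝ᵥ w = ∑ i, (((hA.eigenvectorUnitary : Matrix (Fin n) (Fin n) ℝ)ᵀ *ᵥ w) i)^2 := by
  set U : Matrix (Fin n) (Fin n) ℝ := (hA.eigenvectorUnitary : Matrix (Fin n) (Fin n) ℝ) with hUdef
  have hstar : star U = Uᵀ := by
    rw [Matrix.star_eq_conjTranspose, conjTranspose_eq_transpose_of_trivial]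
  have hUU : U * Uᵀ = 1 := by
    rw [← hstar]; exact (Matrix.mem_unitaryGroup_iff).mp hA.eigenvectorUnitary.2
  have hUU' : Uᵀ * U = 1 := by
    rw [← hstar]; exact (Matrix.mem_unitaryGroup_iff').mp hA.eigenvectorUnitary.2
  constructor
  · conv_lhs => rw [hA.spectral_theorem, Unitary.conjStarAlgAut_apply]
    rw [hstar, ← mulVec_mulVec, ← mulVec_mulVec, dot_shift]
    have hd : diagonal (RCLike.ofReal ∘ hA.eigenvalues) = diagonal hA.eigenvalues := by
      simp [Function.comp]
    rw [hd]
    simp only [dotProduct, mulVec_diagonal]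
    exact Finset.sum_congr rfl fun i _ => by ring
  · have hw : w = U *ᵥ (Uᵀ *ᵥ w) := by rw [mulVec_mulVec, hUU, one_mulVec]
    conv_lhs => rw [hw]
    rw [dot_shift, mulVec_mulVec, hUU', one_mulVec]
    simp only [dotProduct]
    exact Finset.sum_congr rfl fun i _ => by ring

lemma quad_le {n : ℕ} {A : Matrix (Fin n) (Fin n) ℝ} (hA : A.IsHermitian) (w : Fin n → ℝ)
    {b : ℝ} (hb : ∀ i, hA.eigenvalues i ≤ b) : w ⬝ᵥ (A *ᵥ w) ≤ b * (w ⬝ᵥ w) := by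
  obtain ⟨h1, h2⟩ := quad_repr hA w
  rw [h1, h2, Finset.mul_sum]
  exact Finset.sum_le_sum fun i _ => mul_le_mul_of_nonneg_right (hb i) (sq_nonneg _)

lemma le_quad {n : ℕ} {A : Matrix (Fin n) (Fin n) ℝ} (hA : A.IsHermitian) (w : Fin n → ℝ)
    {a : ℝ} (ha : ∀ i, a ≤ hA.eigenvalues i) : a * (w ⬝ᵥ w) ≤ w ⬝ᵥ (A *ᵥ w) := by
  obtain ⟨h1, h2⟩ := quad_repr hA w
  rw [h1, h2, Finset.mul_sum]
  exact Finset.sum_le_sum fun i _ => mul_le_mul_of_nonneg_right (ha i) (sq_nonneg _)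

lemma eig_bounds {n : ℕ} {X S R : Matrix (Fin n) (Fin n) ℝ}
    (hXH : X.IsHermitian) (hST : Sᵀ = S) (hSS : S * S = X)
    (hS1 : S * S⁻¹ = 1) (hRR : R * Rᵀ = 1)
    (hM : (S⁻¹ * (R * X * Rᵀ) * S⁻¹).IsHermitian)
    {a b : ℝ} (ha0 : 0 < a) (hb0 : 0 < b)
    (hA : ∀ i, a ≤ hXH.eigenvalues i) (hB : ∀ i, hXH.eigenvalues i ≤ b) (i : Fin n) :
    a / b ≤ hM.eigenvalues i ∧ hM.eigenvalues i ≤ b / a := by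
  set v : Fin n → ℝ := ⇑(hM.eigenvectorBasis i) with hv
  have hv1 : v ⬝ᵥ v = 1 := basis_dot_self hM i
  have hpt : (S⁻¹)ᵀ = S⁻¹ := by rw [transpose_nonsing_inv, hST]
  set p : Fin n → ℝ := S⁻¹ *ᵥ v with hp
  -- e1 : eigenvalue as Rayleigh quotient of X at Rᵀ p
  have e1 : hM.eigenvalues i = (Rᵀ *ᵥ p) ⬝ᵥ (X *ᵥ (Rᵀ *ᵥ p)) := by
    rw [eig_dot hM i, ← hv]
    have hMv : (S⁻¹ * (R * X * Rᵀ) * S⁻¹) *ᵥ v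
        = S⁻¹ *ᵥ (R *ᵥ (X *ᵥ (Rᵀ *ᵥ (S⁻¹ *ᵥ v)))) := by
      simp only [← mulVec_mulVec]
    rw [hMv, dot_shift, hpt, ← hp, dot_shift R p]
  have e2 : (Rᵀ *ᵥ p) ⬝ᵥ (Rᵀ *ᵥ p) = p ⬝ᵥ p := by
    rw [dot_shift, transpose_transpose, mulVec_mulVec, hRR, one_mulVec]
  have e3 : p ⬝ᵥ (X *ᵥ p) = 1 := by
    have hvp : v = S *ᵥ p := by rw [hp, mulVec_mulVec, hS1, one_mulVec]
    have : v ⬝ᵥ v = p ⬝ᵥ (X *ᵥ p) := by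
      conv_lhs => rw [hvp]
      rw [dot_shift, hST, mulVec_mulVec, hSS, dotProduct_comm]
    rw [← this, hv1]
  have hpp0 : 0 ≤ p ⬝ᵥ p := by
    simp only [dotProduct]
    exact Finset.sum_nonneg fun j _ => mul_self_nonneg _
  have hub : p ⬝ᵥ p ≤ 1 / a := by
    have := le_quad hXH p hA
    rw [le_div_iff₀ ha0, mul_comm]
    linarith [this.trans_eq e3]
  have hlb : 1 / b ≤ p ⬝ᵥ p := by
    have := quad_le hXH p hB
    rw [div_le_iff₀ hb0, mul_comm]
    linarith [e3 ▸ this]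
  constructor
  · calc a / b = a * (1 / b) := by rw [mul_one_div]
    _ ≤ a * (p ⬝ᵥ p) := mul_le_mul_of_nonneg_left hlb ha0.le
    _ = a * ((Rᵀ *ᵥ p) ⬝ᵥ (Rᵀ *ᵥ p)) := by rw [e2]
    _ ≤ (Rᵀ *ᵥ p) ⬝ᵥ (X *ᵥ (Rᵀ *ᵥ p)) := le_quad hXH _ hA
    _ = hM.eigenvalues i := e1.symm
  · calc hM.eigenvalues i = (Rᵀ *ᵥ p) ⬝ᵥ (X *ᵥ (Rᵀ *ᵥ p)) := e1
    _ ≤ b * ((Rᵀ *ᵥ p) ⬝ᵥ (Rᵀ *ᵥ p)) := quad_le hXH _ hB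
    _ = b * (p ⬝ᵥ p) := by rw [e2]
    _ ≤ b * (1 / a) := mul_le_mul_of_nonneg_left hub hb0.le
    _ = b / a := by rw [mul_one_div]

/-- For a 3×3 real symmetric positive-definite `X` with largest eigenvalue `σ₁` and smallest
eigenvalue `σ₃`, and any rotation `R ∈ SO(3)`,
`0 ≤ d(X, R X Rᵀ) ≤ √3 · log(σ₁/σ₃)`, and the lower bound is achieved when `R = I`. -/
theorem stmt9 (X : Matrix (Fin 3) (Fin 3) ℝ) (hX : X.PosDef)
    (R : Matrix (Fin 3) (Fin 3) ℝ) (hR : Rᵀ * R = 1) (hdet : R.det = 1) :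
    0 ≤ geoDist X (R * X * Rᵀ) ∧
    geoDist X (R * X * Rᵀ) ≤ Real.sqrt 3 *
      Real.log (Finset.univ.sup' Finset.univ_nonempty hX.1.eigenvalues /
        Finset.univ.inf' Finset.univ_nonempty hX.1.eigenvalues) ∧
    geoDist X (1 * X * (1 : Matrix (Fin 3) (Fin 3) ℝ)ᵀ) = 0 := by
  classical
  set σ₁ : ℝ := Finset.univ.sup' Finset.univ_nonempty hX.1.eigenvalues with hσ₁
  set σ₃ : ℝ := Finset.univ.inf' Finset.univ_nonempty hX.1.eigenvalues with hσ₃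
  have hle_sup : ∀ i, hX.1.eigenvalues i ≤ σ₁ := fun i =>
    Finset.le_sup' _ (Finset.mem_univ i)
  have hinf_le : ∀ i, σ₃ ≤ hX.1.eigenvalues i := fun i =>
    Finset.inf'_le _ (Finset.mem_univ i)
  have hσ₃pos : 0 < σ₃ := by
    obtain ⟨j, _, hj⟩ := Finset.exists_mem_eq_inf' Finset.univ_nonempty hX.1.eigenvalues
    rw [hσ₃, hj]; exact hX.eigenvalues_pos j
  have hσ₁pos : 0 < σ₁ := lt_of_lt_of_le hσ₃pos ((hinf_le 0).trans (hle_sup 0))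
  have h31 : σ₃ ≤ σ₁ := (hinf_le 0).trans (hle_sup 0)
  -- properties of S = msqrt X
  have hmdef : msqrt X = hX.posSemidef.1.eigenvectorUnitary.1 * diagonal ((RCLike.ofReal : ℝ → ℝ) ∘ (fun x => √x) ∘ hX.posSemidef.1.eigenvalues) *
      (star hX.posSemidef.1.eigenvectorUnitary : Matrix (Fin 3) (Fin 3) ℝ) := dif_pos hX.posSemidef
  set S : Matrix (Fin 3) (Fin 3) ℝ := msqrt X with hS
  have hSH : S.IsHermitian := by
    rw [hmdef, star_eq_conjTranspose]
    exact isHermitian_mul_mul_conjTranspose _ (isHermitian_diagonal _)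
  have hST : Sᵀ = S := by rw [← conjTranspose_eq_transpose_of_trivial]; exact hSH
  have hSS : S * S = X := by
    rw [hmdef]
    have hu : (star hX.posSemidef.1.eigenvectorUnitary : Matrix (Fin 3) (Fin 3) ℝ) *
        hX.posSemidef.1.eigenvectorUnitary.1 = 1 := Unitary.coe_star_mul_self _
    calc _ = hX.posSemidef.1.eigenvectorUnitary.1 * (diagonal ((RCLike.ofReal : ℝ → ℝ) ∘ (fun x => √x) ∘ hX.posSemidef.1.eigenvalues) *
          ((star hX.posSemidef.1.eigenvectorUnitary : Matrix (Fin 3) (Fin 3) ℝ) *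
            hX.posSemidef.1.eigenvectorUnitary.1) * diagonal ((RCLike.ofReal : ℝ → ℝ) ∘ (fun x => √x) ∘ hX.posSemidef.1.eigenvalues)) *
          (star hX.posSemidef.1.eigenvectorUnitary : Matrix (Fin 3) (Fin 3) ℝ) := by
          simp only [Matrix.mul_assoc]
      _ = hX.1.eigenvectorUnitary.1 * diagonal (RCLike.ofReal ∘ hX.1.eigenvalues) *
          (star hX.1.eigenvectorUnitary : Matrix (Fin 3) (Fin 3) ℝ) := by
          rw [hu, Matrix.mul_one, diagonal_mul_diagonal]
          congr 2
          funext i j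
          simp [diagonal_apply, Real.mul_self_sqrt (hX.posSemidef.eigenvalues_nonneg i)]
      _ = X := (hX.1.spectral_theorem).symm
  have hdetS : IsUnit S.det := by
    rw [isUnit_iff_ne_zero]
    intro h
    have : X.det = 0 := by rw [← hSS, det_mul, h, mul_zero]
    exact (hX.det_pos.ne' this)
  have hS1 : S * S⁻¹ = 1 := mul_nonsing_inv S hdetS
  have hS2 : S⁻¹ * S = 1 := nonsing_inv_mul S hdetS
  have hpt : (S⁻¹)ᵀ = S⁻¹ := by rw [transpose_nonsing_inv, hST]
  have hXT : Xᵀ = X := by rw [← conjTranspose_eq_transpose_of_trivial]; exact hX.1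
  have hRR : R * Rᵀ = 1 := mul_eq_one_comm.mp hR
  -- hermitianity of the transported matrix
  have hM : (S⁻¹ * (R * X * Rᵀ) * S⁻¹).IsHermitian := by
    show (S⁻¹ * (R * X * Rᵀ) * S⁻¹)ᴴ = _
    rw [conjTranspose_eq_transpose_of_trivial]
    simp only [transpose_mul, transpose_transpose, hpt, hXT]
    simp only [Matrix.mul_assoc]
  have hbounds := fun i => eig_bounds hX.1 hST hSS hS1 hRR hM hσ₃pos hσ₁pos hinf_le hle_sup i
  refine ⟨?_, ?_, ?_⟩
  · unfold geoDist
    split <;> first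
      | exact Real.sqrt_nonneg _
      | exact le_refl (0:ℝ)
  · have hL0 : 0 ≤ Real.log (σ₁ / σ₃) := Real.log_nonneg ((one_le_div hσ₃pos).mpr h31)
    have hsq : ∀ i : Fin 3, Real.log (hM.eigenvalues i) ^ 2 ≤ Real.log (σ₁ / σ₃) ^ 2 := by
      intro i
      obtain ⟨hl, hu⟩ := hbounds i
      have hpos : 0 < hM.eigenvalues i := lt_of_lt_of_le (div_pos hσ₃pos hσ₁pos) hl
      have h1 : Real.log (hM.eigenvalues i) ≤ Real.log (σ₁ / σ₃) := Real.log_le_log hpos hu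
      have h2 : -Real.log (σ₁ / σ₃) ≤ Real.log (hM.eigenvalues i) := by
        have h3 : Real.log (σ₃ / σ₁) ≤ Real.log (hM.eigenvalues i) :=
          Real.log_le_log (div_pos hσ₃pos hσ₁pos) hl
        rwa [Real.log_div hσ₃pos.ne' hσ₁pos.ne', ← neg_sub,
          ← Real.log_div hσ₁pos.ne' hσ₃pos.ne'] at h3
      exact sq_le_sq' h2 h1
    unfold geoDist
    rw [← hS, dif_pos hM]
    calc Real.sqrt (∑ i, Real.log (hM.eigenvalues i) ^ 2)
        ≤ Real.sqrt (∑ _i : Fin 3, Real.log (σ₁ / σ₃) ^ 2) :=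
          Real.sqrt_le_sqrt (Finset.sum_le_sum fun i _ => hsq i)
      _ = Real.sqrt (3 * Real.log (σ₁ / σ₃) ^ 2) := by
          rw [Finset.sum_const, Finset.card_univ, Fintype.card_fin, nsmul_eq_mul]
          norm_num
      _ = Real.sqrt 3 * Real.log (σ₁ / σ₃) := by
          rw [Real.sqrt_mul (by norm_num : (0:ℝ) ≤ 3), Real.sqrt_sq hL0]
  · have hY : (1 : Matrix (Fin 3) (Fin 3) ℝ) * X * (1 : Matrix (Fin 3) (Fin 3) ℝ)ᵀ = X := by
      rw [transpose_one, Matrix.one_mul, Matrix.mul_one]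
    have hone : S⁻¹ * ((1 : Matrix (Fin 3) (Fin 3) ℝ) * X *
        (1 : Matrix (Fin 3) (Fin 3) ℝ)ᵀ) * S⁻¹ = 1 := by
      rw [hY, ← hSS, ← Matrix.mul_assoc S⁻¹ S S, hS2, Matrix.one_mul, hS1]
    have hH : (S⁻¹ * ((1 : Matrix (Fin 3) (Fin 3) ℝ) * X *
        (1 : Matrix (Fin 3) (Fin 3) ℝ)ᵀ) * S⁻¹).IsHermitian := by
      rw [hone]; exact isHermitian_one
    have key : ∀ w : Fin 3 → ℝ, (S⁻¹ * ((1 : Matrix (Fin 3) (Fin 3) ℝ) * X *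
        (1 : Matrix (Fin 3) (Fin 3) ℝ)ᵀ) * S⁻¹) *ᵥ w = w := by
      intro w; rw [hone, one_mulVec]
    have heig : ∀ i, hH.eigenvalues i = 1 := by
      intro i
      rw [eig_dot hH i, key, basis_dot_self]
    unfold geoDist
    rw [← hS, dif_pos hH]
    simp only [heig, Real.log_one]
    simp
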